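/- For all integers d ≥ 3, t ≥ 1, and n ≥ 2t, any two distinct vertices x, y of the undirected de Bruijn graph B(d,n) satisfy B_t(x) ≠ B_t(y); that is, B(d,n) contains no t-twins. -/

import Mathlib

/-- The undirected de Bruijn graph `B(d,n)`: vertices are strings of length `n`
over the alphabet `{0, ..., d-1}`, and two distinct strings `x`, `y` are adjacent
iff `x_{i+1} = y_i` for all valid `i`, or `y_{i+1} = x_i` for all valid `i`. -/
def deBruijnGraph (d n : ℕ) : SimpleGraph (Fin n → Fin d) where
  Adj x y := x ≠ y ∧
    ((∀ i : Fin n, ∀ h : (i : ℕ) + 1 < n, x ⟨(i : ℕ) + 1, h⟩ = y i) ∨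
     (∀ i : Fin n, ∀ h : (i : ℕ) + 1 < n, y ⟨(i : ℕ) + 1, h⟩ = x i))
  symm := ⟨fun x y ⟨hxy, h⟩ => ⟨hxy.symm, h.symm⟩⟩
  loopless := ⟨fun x ⟨hxx, _⟩ => hxx rfl⟩

/-- The ball of radius `t` around a vertex `x`. -/
def ball {V : Type*} (G : SimpleGraph V) (t : ℕ) (x : V) : Set V :=
  {y | G.dist x y ≤ t}

/-- A set `S` of vertices is a `t`-identifying code if every ball of radius `t`
meets `S`, and distinct vertices have distinct identifying sets `B_t(x) ∩ S`. -/
def IsIdentifyingCode {V : Type*} (G : SimpleGraph V) (t : ℕ) (S : Set V) : Prop :=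
  (∀ x : V, (ball G t x ∩ S).Nonempty) ∧
  ∀ x y : V, x ≠ y → ball G t x ∩ S ≠ ball G t y ∩ S

namespace DBaux

variable {d n : ℕ}

/-- left shift of `x` by `k`, filling from `w`. -/
def zsh (x : Fin n → Fin d) (w : ℕ → Fin d) (k : ℕ) : Fin n → Fin d :=
  fun i => if h : (i : ℕ) + k < n then x ⟨(i : ℕ) + k, h⟩ else w ((i : ℕ) + k - n)

lemma zsh_zero (x : Fin n → Fin d) (w : ℕ → Fin d) : zsh x w 0 = x := by
  funext i
  simp only [zsh]
  rw [dif_pos (by omega : (i : ℕ) + 0 < n)]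
  congr 1

lemma zsh_succ (x : Fin n → Fin d) (w : ℕ → Fin d) (k : ℕ) (i : Fin n)
    (h : (i : ℕ) + 1 < n) :
    zsh x w k ⟨(i : ℕ) + 1, h⟩ = zsh x w (k + 1) i := by
  simp only [zsh]
  rcases Nat.lt_or_ge ((i : ℕ) + 1 + k) n with h1 | h1
  · rw [dif_pos h1, dif_pos (by omega : (i : ℕ) + (k + 1) < n)]
    congr 1; ext; simp; omega
  · rw [dif_neg (by omega), dif_neg (by omega)]
    congr 1; omega

lemma walk_zsh (x : Fin n → Fin d) (w : ℕ → Fin d) (k : ℕ) :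
    ∃ p : (deBruijnGraph d n).Walk x (zsh x w k), p.length ≤ k := by
  induction k with
  | zero => exact ⟨SimpleGraph.Walk.nil.copy rfl (zsh_zero x w).symm, by simp⟩
  | succ k ih =>
    obtain ⟨p, hp⟩ := ih
    by_cases hq : zsh x w k = zsh x w (k + 1)
    · exact ⟨p.copy rfl hq, by simpa using by omega⟩
    · refine ⟨p.concat (show (deBruijnGraph d n).Adj _ _ from ⟨hq, Or.inl ?_⟩), ?_⟩
      · intro i h; exact zsh_succ x w k i h
      · rw [SimpleGraph.Walk.length_concat]; omega

lemma dist_zsh (x : Fin n → Fin d) (w : ℕ → Fin d) (k : ℕ) :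
    (deBruijnGraph d n).dist x (zsh x w k) ≤ k := by
  obtain ⟨p, hp⟩ := walk_zsh x w k
  exact le_trans (SimpleGraph.dist_le p) hp

lemma reachable (hn : 0 < n) (hd : 0 < d) (u v : Fin n → Fin d) :
    (deBruijnGraph d n).Reachable u v := by
  have hz : zsh u (fun j => if h : j < n then v ⟨j, h⟩ else v ⟨0, hn⟩) n = v := by
    funext i
    simp only [zsh]
    rw [dif_neg (by omega)]
    have : (i : ℕ) + n - n = (i : ℕ) := by omega
    rw [this, dif_pos i.isLt]
  obtain ⟨p, _⟩ := walk_zsh u (fun j => if h : j < n then v ⟨j, h⟩ else v ⟨0, hn⟩) n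
  exact ⟨p.copy rfl hz⟩


lemma walk_struct (y z : Fin n → Fin d) (p : (deBruijnGraph d n).Walk y z) :
    ∃ a b : ℕ, a + b ≤ p.length ∧
      ∀ i : Fin n, b ≤ (i : ℕ) → ∀ h : (i : ℕ) + a < n,
        z i = y ⟨(i : ℕ) + a - b, by omega⟩ := by
  induction p with
  | nil =>
    refine ⟨0, 0, by simp, fun i hb h => ?_⟩
    congr 1
  | @cons u v z hadj p ih =>
    obtain ⟨a, b, hab, hcond⟩ := ih
    rcases hadj.2 with hsh | hsh
    · refine ⟨a + 1, b, by simp [SimpleGraph.Walk.length_cons]; omega, fun i hb h => ?_⟩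
      have h1 : (i : ℕ) + a < n := by omega
      rw [hcond i hb h1]
      have h2 : ((⟨(i : ℕ) + a - b, by omega⟩ : Fin n) : ℕ) + 1 < n := by
        simp only []; omega
      rw [← hsh ⟨(i : ℕ) + a - b, by omega⟩ h2]
      congr 1
      exact Fin.ext (by simp; omega)
    · refine ⟨a, b + 1, by simp [SimpleGraph.Walk.length_cons]; omega, fun i hb h => ?_⟩
      have h1 : (i : ℕ) + a < n := by omega
      rw [hcond i (by omega) h1]
      have h2 : ((⟨(i : ℕ) + a - (b + 1), by omega⟩ : Fin n) : ℕ) + 1 < n := by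
        simp only []; omega
      rw [← hsh ⟨(i : ℕ) + a - (b + 1), by omega⟩ h2]
      congr 1
      exact Fin.ext (by simp; omega)


lemma sum_bound (d : ℕ) (hd : 3 ≤ d) (t : ℕ) (ht : 1 ≤ t) :
    (∑ A ∈ Finset.range t, 2 * d ^ A) ≤ d ^ t - 1 := by
  induction t with
  | zero => exact absurd ht (by omega)
  | succ t ih =>
    rcases Nat.eq_zero_or_pos t with rfl | hpos
    · simp [Finset.sum_range_succ]
      omega
    · rw [Finset.sum_range_succ, pow_succ]
      have h1 := ih hpos
      have h2 : 1 ≤ d ^ t := Nat.one_le_pow _ _ (by omega)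
      have h3 : d ^ t * 3 ≤ d ^ t * d := Nat.mul_le_mul_left _ (by omega)
      omega


open Finset in
lemma key (d t n : ℕ) (hd : 3 ≤ d) (ht : 1 ≤ t) (hn : 2 * t ≤ n)
    (x y : Fin n → Fin d) (k : Fin n) (hk : t ≤ (k : ℕ)) (hne : x k ≠ y k) :
    ball (deBruijnGraph d n) t x ≠ ball (deBruijnGraph d n) t y := by
  classical
  intro hball
  have hk2 : (k : ℕ) < n := k.isLt
  set Z : (Fin t → Fin d) → (Fin n → Fin d) :=
    fun w => zsh x (fun j => w ⟨j % t, Nat.mod_lt _ (by omega)⟩) t with hZ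
  have hZval : ∀ (w : Fin t → Fin d) (i : Fin n),
      Z w i = if h : (i : ℕ) + t < n then x ⟨(i : ℕ) + t, h⟩
        else w ⟨(i : ℕ) + t - n, by omega⟩ := by
    intro w i
    simp only [hZ, zsh]
    split_ifs with h
    · rfl
    · congr 1
      apply Fin.ext
      simp only []
      exact Nat.mod_eq_of_lt (by have := i.isLt; omega)
  set S : ℕ → ℕ → Finset (Fin t → Fin d) := fun A B =>
    Finset.univ.filter (fun w => ∀ i : Fin n, B ≤ (i : ℕ) → ∀ h : (i : ℕ) + A < n,
      Z w i = y ⟨(i : ℕ) + A - B, by omega⟩) with hS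
  -- cardinality bound
  have hcard : ∀ A B : ℕ, A + B ≤ t → (S A B).card ≤ d ^ A := by
    intro A B hAB
    have hdet : ∀ w ∈ S A B, ∀ j : ℕ, ∀ hj : j < t - A,
        w ⟨j, by omega⟩ = y ⟨n - t + j + A - B, by omega⟩ := by
      intro w hw j hj
      have hw' := (Finset.mem_filter.1 hw).2
      have hin : (n - t + j) < n := by omega
      have h1 := hw' ⟨n - t + j, hin⟩ (by simp; omega) (by simp; omega)
      rw [hZval] at h1
      rw [dif_neg (by simp; omega)] at h1
      have h2 : w ⟨n - t + j + t - n, by omega⟩ = w ⟨j, by omega⟩ := by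
        congr 1; exact Fin.ext (by simp; omega)
      rw [h2] at h1
      rw [h1]
    have step : (S A B).card ≤ Fintype.card (Fin A → Fin d) := by
      rw [← Finset.card_univ]
      apply Finset.card_le_card_of_injOn (fun w (j : Fin A) => w ⟨t - A + (j : ℕ), by omega⟩)
        (fun _ _ => Finset.mem_univ _)
      intro w1 hw1 w2 hw2 hf
      funext j
      rcases Nat.lt_or_ge (j : ℕ) (t - A) with hj | hj
      · have e1 := hdet w1 hw1 (j : ℕ) hj
        have e2 := hdet w2 hw2 (j : ℕ) hj
        have e3 : w1 ⟨(j : ℕ), by have := j.isLt; omega⟩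
            = w2 ⟨(j : ℕ), by have := j.isLt; omega⟩ := by rw [e1, e2]
        have e4 : (⟨(j : ℕ), by have := j.isLt; omega⟩ : Fin t) = j := Fin.ext rfl
        rwa [e4] at e3
      · have hjA : (j : ℕ) - (t - A) < A := by have := j.isLt; omega
        have e5 := congrFun hf ⟨(j : ℕ) - (t - A), hjA⟩
        simp only [] at e5
        have e1 : (⟨t - A + ((j : ℕ) - (t - A)), by have := j.isLt; omega⟩ : Fin t) = j :=
          Fin.ext (by simp only []; have := j.isLt; omega)
        rwa [e1] at e5
    simpa [Fintype.card_fun] using step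
  -- coverage
  have hcov : ∀ w : Fin t → Fin d, ∃ A B : ℕ, A < t ∧ (A + B = t ∨ A + B + 1 = t) ∧ w ∈ S A B := by
    intro w
    have hzx : (deBruijnGraph d n).dist x (Z w) ≤ t := dist_zsh x _ t
    have hzy : (deBruijnGraph d n).dist y (Z w) ≤ t := by
      have hmem : Z w ∈ ball (deBruijnGraph d n) t x := hzx
      rw [hball] at hmem
      exact hmem
    obtain ⟨p, hp⟩ :=
      (reachable (by omega) (by omega) y (Z w)).exists_walk_length_eq_dist
    obtain ⟨a, b, hab, hcond⟩ := walk_struct y (Z w) p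
    have habt : a + b ≤ t := by omega
    have hat : a < t := by
      by_contra hat
      have ha : a = t := by omega
      have hb : b = 0 := by omega
      set i0 : Fin n := ⟨(k : ℕ) - t, by omega⟩ with hi0
      have hi0v : (i0 : ℕ) = (k : ℕ) - t := rfl
      have hlt : (i0 : ℕ) + t < n := by omega
      have hlt2 : (i0 : ℕ) + a < n := by omega
      have h1 := hcond i0 (by omega) hlt2
      rw [hZval, dif_pos hlt] at h1
      apply hne
      calc x k = x ⟨(i0 : ℕ) + t, hlt⟩ := by
              congr 1
              exact Fin.ext (show (k : ℕ) = (i0 : ℕ) + t by omega)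
        _ = y ⟨(i0 : ℕ) + a - b, by omega⟩ := h1
        _ = y k := by
              congr 1
              exact Fin.ext (show (i0 : ℕ) + a - b = (k : ℕ) by omega)
    refine ⟨a + (t - a - b) / 2, b + (t - a - b) / 2, by omega, by omega, ?_⟩
    rw [hS]
    simp only [Finset.mem_filter, Finset.mem_univ, true_and]
    intro i hBi h
    have h1 := hcond i (by omega) (by omega)
    rw [h1]
    congr 1
    exact Fin.ext (by simp only []; omega)
  -- counting
  have hsub : (Finset.univ : Finset (Fin t → Fin d)) ⊆
      (Finset.range t).biUnion (fun A => S A (t - A) ∪ S A (t - 1 - A)) := by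
    intro w _
    obtain ⟨A, B, hA, hAB, hw⟩ := hcov w
    rw [Finset.mem_biUnion]
    refine ⟨A, Finset.mem_range.2 hA, ?_⟩
    rw [Finset.mem_union]
    rcases hAB with hAB | hAB
    · left
      have hB : B = t - A := by omega
      exact hB ▸ hw
    · right
      have hB : B = t - 1 - A := by omega
      exact hB ▸ hw
  have hbig : (Finset.univ : Finset (Fin t → Fin d)).card ≤ ∑ A ∈ Finset.range t, 2 * d ^ A := by
    calc (Finset.univ : Finset (Fin t → Fin d)).card
        ≤ ((Finset.range t).biUnion fun A => S A (t - A) ∪ S A (t - 1 - A)).card :=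
          Finset.card_le_card hsub
      _ ≤ ∑ A ∈ Finset.range t, (S A (t - A) ∪ S A (t - 1 - A)).card := Finset.card_biUnion_le
      _ ≤ ∑ A ∈ Finset.range t, 2 * d ^ A := by
          apply Finset.sum_le_sum
          intro A hA
          rw [Finset.mem_range] at hA
          have c1 := hcard A (t - A) (by omega)
          have c2 := hcard A (t - 1 - A) (by omega)
          have c3 := Finset.card_union_le (S A (t - A)) (S A (t - 1 - A))
          omega
  have hcards : (Finset.univ : Finset (Fin t → Fin d)).card = d ^ t := by
    simp [Fintype.card_fun]
  have hpow : 1 ≤ d ^ t := Nat.one_le_pow _ _ (by omega)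
  have hsum := sum_bound d hd t ht
  omega

def rev (x : Fin n → Fin d) : Fin n → Fin d :=
  fun i => x ⟨n - 1 - (i : ℕ), by have := i.isLt; omega⟩

lemma rev_rev (x : Fin n → Fin d) : rev (rev x) = x := by
  funext i
  simp only [rev]
  congr 1
  exact Fin.ext (by show n - 1 - (n - 1 - (i : ℕ)) = (i : ℕ); have := i.isLt; omega)

lemma rev_shift {x y : Fin n → Fin d}
    (hs : ∀ i : Fin n, ∀ h : (i : ℕ) + 1 < n, x ⟨(i : ℕ) + 1, h⟩ = y i) :
    ∀ i : Fin n, ∀ h : (i : ℕ) + 1 < n, (rev y) ⟨(i : ℕ) + 1, h⟩ = (rev x) i := by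
  intro i hi
  have hm : (n - 2 - (i : ℕ)) + 1 < n := by have := i.isLt; omega
  have key := hs ⟨n - 2 - (i : ℕ), by omega⟩ hm
  show y ⟨n - 1 - ((i : ℕ) + 1), by omega⟩ = x ⟨n - 1 - (i : ℕ), by have := i.isLt; omega⟩
  calc y ⟨n - 1 - ((i : ℕ) + 1), by omega⟩
      = y ⟨n - 2 - (i : ℕ), by omega⟩ := by
        congr 1
        exact Fin.ext (by show n - 1 - ((i : ℕ) + 1) = n - 2 - (i : ℕ); omega)
    _ = x ⟨(n - 2 - (i : ℕ)) + 1, hm⟩ := key.symm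
    _ = x ⟨n - 1 - (i : ℕ), by have := i.isLt; omega⟩ := by
        congr 1
        exact Fin.ext (by show (n - 2 - (i : ℕ)) + 1 = n - 1 - (i : ℕ); have := i.isLt; omega)

lemma adj_rev {x y : Fin n → Fin d} (h : (deBruijnGraph d n).Adj x y) :
    (deBruijnGraph d n).Adj (rev x) (rev y) := by
  obtain ⟨hne, hsh⟩ := h
  refine ⟨fun he => hne ?_, ?_⟩
  · have := congrArg rev he
    rwa [rev_rev, rev_rev] at this
  rcases hsh with hs | hs
  · exact Or.inr (rev_shift hs)
  · exact Or.inl (rev_shift hs)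

def revHom : deBruijnGraph d n →g deBruijnGraph d n :=
  ⟨rev, fun h => adj_rev h⟩

lemma dist_rev_le (hn0 : 0 < n) (hd0 : 0 < d) (u v : Fin n → Fin d) :
    (deBruijnGraph d n).dist (rev u) (rev v) ≤ (deBruijnGraph d n).dist u v := by
  obtain ⟨p, hp⟩ := (reachable hn0 hd0 u v).exists_walk_length_eq_dist
  calc (deBruijnGraph d n).dist (rev u) (rev v) ≤ (p.map revHom).length :=
        SimpleGraph.dist_le _
    _ = p.length := SimpleGraph.Walk.length_map revHom p
    _ = (deBruijnGraph d n).dist u v := hp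

lemma dist_rev (hn0 : 0 < n) (hd0 : 0 < d) (u v : Fin n → Fin d) :
    (deBruijnGraph d n).dist (rev u) (rev v) = (deBruijnGraph d n).dist u v := by
  refine le_antisymm (dist_rev_le hn0 hd0 u v) ?_
  have h2 := dist_rev_le hn0 hd0 (rev u) (rev v)
  rwa [rev_rev, rev_rev] at h2

lemma ball_rev {t : ℕ} (hn0 : 0 < n) (hd0 : 0 < d) (u v : Fin n → Fin d)
    (h : ball (deBruijnGraph d n) t u = ball (deBruijnGraph d n) t v) :
    ball (deBruijnGraph d n) t (rev u) = ball (deBruijnGraph d n) t (rev v) := by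
  have key : ∀ (w z : Fin n → Fin d),
      (deBruijnGraph d n).dist (rev w) z = (deBruijnGraph d n).dist w (rev z) := by
    intro w z
    conv_lhs => rw [show z = rev (rev z) from (rev_rev z).symm]
    rw [dist_rev hn0 hd0]
  ext z
  simp only [ball, Set.mem_setOf_eq, key]
  constructor
  · intro hz
    have hz' : rev z ∈ ball (deBruijnGraph d n) t u := hz
    rw [h] at hz'
    exact hz'
  · intro hz
    have hz' : rev z ∈ ball (deBruijnGraph d n) t v := hz
    rw [← h] at hz'
    exact hz'

end DBaux

theorem deBruijn_no_twins (d t n : ℕ) (hd : 3 ≤ d) (ht : 1 ≤ t) (hn : 2 * t ≤ n)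
    (x y : Fin n → Fin d) (hxy : x ≠ y) :
    ball (deBruijnGraph d n) t x ≠ ball (deBruijnGraph d n) t y := by
  have hn0 : 0 < n := by omega
  have hd0 : 0 < d := by omega
  have hex : ∃ j : Fin n, x j ≠ y j := by
    by_contra hc
    push_neg at hc
    exact hxy (funext hc)
  obtain ⟨j, hj⟩ := hex
  rcases Nat.lt_or_ge (j : ℕ) t with hjt | hjt
  · intro hball
    have hball' := DBaux.ball_rev hn0 hd0 x y hball
    have hjn : (j : ℕ) < n := j.isLt
    refine DBaux.key d t n hd ht hn (DBaux.rev x) (DBaux.rev y)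
      ⟨n - 1 - (j : ℕ), by omega⟩ (by show t ≤ n - 1 - (j : ℕ); omega) ?_ hball'
    intro he
    apply hj
    have e1 : ∀ z : Fin n → Fin d,
        DBaux.rev z (⟨n - 1 - (j : ℕ), by omega⟩ : Fin n) = z j := by
      intro z
      simp only [DBaux.rev]
      congr 1
      exact Fin.ext (by show n - 1 - (n - 1 - (j : ℕ)) = (j : ℕ); omega)
    rw [e1 x, e1 y] at he
    exact he
  · exact DBaux.key d t n hd ht hn x y j hjt hj
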